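/- arXiv:math/9908090 — 2 statements merged into one kernel-verified Lean document; each statement's English description precedes it below -/
import Mathlib

section
/- The operators R_1,…,R_{n−1} satisfy the Hecke algebra relations: R_i∘R_{i+1}∘R_i = R_{i+1}∘R_i∘R_{i+1} for all 1 ≤ i ≤ n−2; R_i∘R_j = R_j∘R_i whenever |i−j| > 1; and R_i∘R_i = (1−q)·R_i + q·id for all 1 ≤ i ≤ n−1. -/
open MvPolynomial

noncomputable section

/-- The ground field `F = ℚ(q)`, rational functions over `ℚ`. -/
abbrev F : Type := RatFunc ℚ

/-- The indeterminate `q`. -/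
def q : F := RatFunc.X

/-- The polynomial ring `P_n = F[x_1, …, x_n]` (variables indexed `0, …, n-1`). -/
abbrev Pn (n : ℕ) : Type := MvPolynomial (Fin n) F

/-- The adjacent transposition `s_i` swapping positions `i` and `i+1` (0-indexed). -/
def transp (n i : ℕ) (h : i + 1 < n) : Equiv.Perm (Fin n) :=
  Equiv.swap ⟨i, by omega⟩ ⟨i + 1, h⟩

/-- Multiplication by the variable `x_j`. -/
def Xop {n : ℕ} (j : Fin n) : Pn n →ₗ[F] Pn n := LinearMap.mulLeft F (X j)

/-- A family of candidate divided-difference operators. -/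
abbrev DDFam (n : ℕ) := ∀ i : ℕ, i + 1 < n → (Pn n →ₗ[F] Pn n)

/-- `dd` is the family of divided difference operators:
`(x_i - x_{i+1}) · ∂_i f = f - s_i f`.  This determines `dd` uniquely. -/
def IsDD {n : ℕ} (dd : DDFam n) : Prop :=
  ∀ (i : ℕ) (h : i + 1 < n) (f : Pn n),
    (X (⟨i, by omega⟩ : Fin n) - X ⟨i + 1, h⟩) * dd i h f
      = f - rename (⇑(transp n i h)) f

/-- The q-commutator operator `A_i = ∂_i ∘ X_i - q · X_i ∘ ∂_i`. -/
def Aop {n : ℕ} (dd : DDFam n) (i : ℕ) (h : i + 1 < n) : Pn n →ₗ[F] Pn n :=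
  dd i h ∘ₗ Xop ⟨i, by omega⟩ - q • (Xop (⟨i, by omega⟩ : Fin n) ∘ₗ dd i h)

/-- The operator `B_i = -(∂_i ∘ X_{i+1} - q · X_{i+1} ∘ ∂_i)`. -/
def Bop {n : ℕ} (dd : DDFam n) (i : ℕ) (h : i + 1 < n) : Pn n →ₗ[F] Pn n :=
  -(dd i h ∘ₗ Xop ⟨i + 1, h⟩ - q • (Xop (⟨i + 1, h⟩ : Fin n) ∘ₗ dd i h))

/-- Swap the exponents of `x_i` and `x_{i+1}` in a monomial exponent vector. -/
def swapIdx (n i : ℕ) (h : i + 1 < n) (d : Fin n →₀ ℕ) : Fin n →₀ ℕ :=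
  Finsupp.equivMapDomain (transp n i h) d

/-- Value of `R_i` on the monomial with exponent vector `d`. -/
def Rval {n : ℕ} (i : ℕ) (h : i + 1 < n) (d : Fin n →₀ ℕ) : Pn n :=
  if d ⟨i + 1, h⟩ < d ⟨i, by omega⟩ then q • monomial (swapIdx n i h d) (1 : F)
  else if d ⟨i, by omega⟩ < d ⟨i + 1, h⟩ then
    (1 - q) • monomial d (1 : F) + monomial (swapIdx n i h d) (1 : F)
  else monomial d (1 : F)

/-- The operator `R_i`, the linear extension of `Rval` from monomials. -/
def Rop {n : ℕ} (i : ℕ) (h : i + 1 < n) : Pn n →ₗ[F] Pn n :=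
  (basisMonomials (Fin n) F).constr F (Rval i h)

/-- Value of `R*_i` on the monomial with exponent vector `d`. -/
def Rstarval {n : ℕ} (i : ℕ) (h : i + 1 < n) (d : Fin n →₀ ℕ) : Pn n :=
  if d ⟨i + 1, h⟩ ≤ d ⟨i, by omega⟩ then monomial (swapIdx n i h d) (1 : F)
  else (1 - q) • monomial d (1 : F) + q • monomial (swapIdx n i h d) (1 : F)

/-- The operator `R*_i`, the linear extension of `Rstarval` from monomials. -/
def Rstarop {n : ℕ} (i : ℕ) (h : i + 1 < n) : Pn n →ₗ[F] Pn n :=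
  (basisMonomials (Fin n) F).constr F (Rstarval i h)

/-- `f` is a symmetric polynomial. -/
def symmP {n : ℕ} (f : Pn n) : Prop :=
  ∀ σ : Equiv.Perm (Fin n), rename (⇑σ) f = f

/-- The ideal `I_n` generated by symmetric polynomials with zero constant term. -/
def In (n : ℕ) : Ideal (Pn n) :=
  Ideal.span {f : Pn n | symmP f ∧ constantCoeff f = 0}

/-- The quotient map `P_n → P_n / I_n` as an `F`-linear map. -/
def mkI (n : ℕ) : Pn n →ₗ[F] (Pn n ⧸ In n) :=
  (Ideal.Quotient.mkₐ F (In n)).toLinearMap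

/-- `R^k`: the image in `P_n/I_n` of the homogeneous polynomials of degree `k`. -/
def RkSub (n k : ℕ) : Submodule F (Pn n ⧸ In n) :=
  Submodule.map (mkI n) (homogeneousSubmodule (Fin n) F k)

/-- The Coxeter length of a permutation: its number of inversions. -/
def len {n : ℕ} (w : Equiv.Perm (Fin n)) : ℕ :=
  (Finset.univ.filter (fun p : Fin n × Fin n => p.1 < p.2 ∧ w p.2 < w p.1)).card

/-- The staircase monomial `x_1^{n-1} x_2^{n-2} ⋯ x_{n-1}`. -/
def staircase (n : ℕ) : Pn n := ∏ j : Fin n, (X j : Pn n) ^ (n - 1 - (j : ℕ))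

/-- `S` is the family of Schubert polynomials: `S w₀` is the staircase monomial, and
`∂_i 𝔖_w = 𝔖_{w s_i}` whenever `ℓ(w s_i) < ℓ(w)`.  This determines `S` uniquely. -/
def IsSchubert {n : ℕ} (dd : DDFam n) (S : Equiv.Perm (Fin n) → Pn n) : Prop :=
  S (Fin.revPerm) = staircase n ∧
  ∀ (w : Equiv.Perm (Fin n)) (i : ℕ) (h : i + 1 < n),
    len (w * transp n i h) < len w → dd i h (S w) = S (w * transp n i h)

/-- The 3-cycle `(a, b, c)`, sending `a ↦ b`, `b ↦ c`, `c ↦ a`. -/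
def cyc3 {n : ℕ} (a b c : Fin n) : Equiv.Perm (Fin n) :=
  Equiv.swap a c * Equiv.swap a b

/-- The Hecke algebra relations for a family of operators. -/
def HeckeRels {n : ℕ} (T : ∀ i : ℕ, i + 1 < n → (Pn n →ₗ[F] Pn n)) : Prop :=
  (∀ (i : ℕ) (h : i + 2 < n),
      T i (by omega) ∘ₗ (T (i + 1) (by omega) ∘ₗ T i (by omega))
        = T (i + 1) (by omega) ∘ₗ (T i (by omega) ∘ₗ T (i + 1) (by omega))) ∧
  (∀ (i j : ℕ) (hi : i + 1 < n) (hj : j + 1 < n), (i + 1 < j ∨ j + 1 < i) →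
      T i hi ∘ₗ T j hj = T j hj ∘ₗ T i hi) ∧
  (∀ (i : ℕ) (h : i + 1 < n),
      T i h ∘ₗ T i h = (1 - q) • T i h + q • LinearMap.id)

/-- Composition `T_{j₁} ∘ T_{j₂} ∘ ⋯ ∘ T_{j_k}` along a list of indices. -/
def compFam {n : ℕ} (T : ℕ → (Pn n →ₗ[F] Pn n)) : List ℕ → (Pn n →ₗ[F] Pn n)
  | [] => LinearMap.id
  | j :: l => T j ∘ₗ compFam T l

/-- Totalized version of `Aop` (identity outside the allowed index range). -/
def Atot {n : ℕ} (dd : DDFam n) (j : ℕ) : Pn n →ₗ[F] Pn n :=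
  if h : j + 1 < n then Aop dd j h else LinearMap.id

/-- Totalized version of `Rop` (identity outside the allowed index range). -/
def Rtot (n : ℕ) (j : ℕ) : Pn n →ₗ[F] Pn n :=
  if h : j + 1 < n then Rop j h else LinearMap.id

/-- The (0-indexed) index set `J_μ`: all `j ∈ {0, …, n-2}` such that `j+1` is not a
partial sum `μ_1 + ⋯ + μ_k` of the partition. -/
def Jlist (n : ℕ) (μ : List ℕ) : List ℕ :=
  (List.range (n - 1)).filter
    (fun j => (List.range (μ.length + 1)).all (fun k => (μ.take k).sum != j + 1))

/-- The value `w(a)` of a permutation, as a function on naturals. -/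
def permVal {n : ℕ} (w : Equiv.Perm (Fin n)) (a : ℕ) : ℕ :=
  if h : a < n then ((w ⟨a, h⟩ : Fin n) : ℕ) else a

open scoped Classical in
/-- The factor `m_q` attached to the block of positions `p, p+1, …, p+m-1`:
`(-q)^j` if, within the block, `w` has descents exactly at the first `j` places
(i.e. `w` decreases on the first `j+1` entries and then increases), and `0` otherwise. -/
def blockWeight {n : ℕ} (w : Equiv.Perm (Fin n)) (p m : ℕ) : F :=
  if h : ∃ j, j < m ∧ ∀ a : ℕ, p ≤ a → a + 1 < p + m →
      (permVal w (a + 1) < permVal w a ↔ a < p + j)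
  then (-q) ^ h.choose else 0

/-- `weight_q^μ(w) = ∏ m_q(w_i)`, the product of the block factors over the blocks of `μ`. -/
def weightq {n : ℕ} (μ : List ℕ) (w : Equiv.Perm (Fin n)) : F :=
  ∏ t ∈ Finset.range μ.length, blockWeight w ((μ.take t).sum) (μ.getD t 0)

/-- `μ` is a partition of `n`. -/
def IsPartition (n : ℕ) (μ : List ℕ) : Prop :=
  List.Pairwise (· ≥ ·) μ ∧ (∀ x ∈ μ, 0 < x) ∧ μ.sum = n

/-- The operator `D_i f = c_i · f + P_i(x_i, x_{i+1}) · ∂_i f`. -/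
def Dop {n : ℕ} (dd : DDFam n) (c : ℕ → F) (Pp : ℕ → MvPolynomial (Fin 2) F)
    (i : ℕ) (h : i + 1 < n) : Pn n →ₗ[F] Pn n :=
  c i • LinearMap.id +
    LinearMap.mulLeft F (aeval ![(X ⟨i, by omega⟩ : Pn n), X ⟨i + 1, h⟩] (Pp i)) ∘ₗ dd i h

/-- `f` has integer coefficients. -/
def IsIntPoly {n : ℕ} (f : Pn n) : Prop :=
  ∀ d : Fin n →₀ ℕ, ∃ z : ℤ, coeff d f = (z : F)


/-! ### Auxiliary lemmas for statement 7 -/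

lemma swapIdx_apply' {n i : ℕ} (h : i + 1 < n) (d : Fin n →₀ ℕ) (x : Fin n) :
    swapIdx n i h d x = d (transp n i h x) := by
  simp [swapIdx, Finsupp.equivMapDomain_apply, transp]

lemma swapIdx_fst {n i : ℕ} (h : i + 1 < n) (d : Fin n →₀ ℕ) (p : i < n) :
    swapIdx n i h d ⟨i, p⟩ = d ⟨i + 1, h⟩ := by
  rw [swapIdx_apply']
  exact congrArg d (Equiv.swap_apply_left _ _)

lemma swapIdx_snd {n i : ℕ} (h : i + 1 < n) (d : Fin n →₀ ℕ) (p : i + 1 < n) :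
    swapIdx n i h d ⟨i + 1, p⟩ = d ⟨i, Nat.lt_of_succ_lt h⟩ := by
  rw [swapIdx_apply']
  exact congrArg d (Equiv.swap_apply_right _ _)

lemma swapIdx_other {n i : ℕ} (h : i + 1 < n) (d : Fin n →₀ ℕ) (x : ℕ) (p : x < n)
    (hx1 : x ≠ i) (hx2 : x ≠ i + 1) :
    swapIdx n i h d ⟨x, p⟩ = d ⟨x, p⟩ := by
  rw [swapIdx_apply']
  exact congrArg d (Equiv.swap_apply_of_ne_of_ne (Fin.ne_of_val_ne hx1) (Fin.ne_of_val_ne hx2))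

lemma swapIdx_swapIdx {n i : ℕ} (h : i + 1 < n) (d : Fin n →₀ ℕ) :
    swapIdx n i h (swapIdx n i h d) = d := by
  ext x
  rw [swapIdx_apply', swapIdx_apply']
  simp [transp, Equiv.swap_apply_self]

lemma transp_val {n i : ℕ} (h : i + 1 < n) (x : Fin n) :
    ((transp n i h x : Fin n) : ℕ) =
      if (x : ℕ) = i then i + 1 else if (x : ℕ) = i + 1 then i else (x : ℕ) := by
  simp only [transp, Equiv.swap_apply_def]
  split_ifs <;> simp_all [Fin.ext_iff]

lemma transp_braid {n i : ℕ} (h1 : i + 1 < n) (h2 : i + 1 + 1 < n) (x : Fin n) :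
    transp n i h1 (transp n (i + 1) h2 (transp n i h1 x)) =
    transp n (i + 1) h2 (transp n i h1 (transp n (i + 1) h2 x)) := by
  have hu : i < n := by omega
  set u : Fin n := ⟨i, hu⟩ with hudef
  set v : Fin n := ⟨i + 1, h1⟩ with hvdef
  set w : Fin n := ⟨i + 2, h2⟩ with hwdef
  have e1 : transp n i h1 = Equiv.swap u v := rfl
  have e2 : transp n (i + 1) h2 = Equiv.swap v w := rfl
  have nuv : u ≠ v := by simp only [hudef, hvdef, ne_eq, Fin.mk.injEq]; omega
  have nuw : u ≠ w := by simp only [hudef, hwdef, ne_eq, Fin.mk.injEq]; omega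
  have nwv : w ≠ v := by simp only [hwdef, hvdef, ne_eq, Fin.mk.injEq]; omega
  have key : Equiv.swap u v * Equiv.swap v w * Equiv.swap u v
      = Equiv.swap v w * Equiv.swap u v * Equiv.swap v w := by
    have A := Equiv.swap_mul_swap_mul_swap nuv nuw
    have B := Equiv.swap_mul_swap_mul_swap nwv (Ne.symm nuw)
    rw [Equiv.swap_comm v u, Equiv.swap_comm w v] at B
    rw [B, Equiv.swap_comm u w, ← A]
  have := congrArg (fun σ : Equiv.Perm (Fin n) => σ x) key
  simpa only [Equiv.Perm.mul_apply, ← e1, ← e2] using this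

lemma swapIdx_braid {n i : ℕ} (h1 : i + 1 < n) (h2 : i + 1 + 1 < n) (d : Fin n →₀ ℕ) :
    swapIdx n (i + 1) h2 (swapIdx n i h1 (swapIdx n (i + 1) h2 d)) =
    swapIdx n i h1 (swapIdx n (i + 1) h2 (swapIdx n i h1 d)) := by
  ext x
  simp only [swapIdx_apply']
  exact congrArg d (transp_braid h1 h2 x).symm

set_option maxHeartbeats 1000000 in
lemma transp_comm {n i j : ℕ} (hi : i + 1 < n) (hj : j + 1 < n)
    (hij : i + 1 < j ∨ j + 1 < i) (x : Fin n) :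
    transp n i hi (transp n j hj x) = transp n j hj (transp n i hi x) := by
  apply Fin.ext
  simp only [transp_val]
  split_ifs <;> omega

lemma swapIdx_comm {n i j : ℕ} (hi : i + 1 < n) (hj : j + 1 < n)
    (hij : i + 1 < j ∨ j + 1 < i) (d : Fin n →₀ ℕ) :
    swapIdx n j hj (swapIdx n i hi d) = swapIdx n i hi (swapIdx n j hj d) := by
  ext x
  simp only [swapIdx_apply']
  exact congrArg d (transp_comm hi hj hij x)

lemma Rop_monomial {n i : ℕ} (h : i + 1 < n) (d : Fin n →₀ ℕ) :
    Rop i h (monomial d (1 : F)) = Rval i h d := by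
  have := (basisMonomials (Fin n) F).constr_basis F (Rval i h) d
  simpa [Rop, coe_basisMonomials] using this

lemma quad_aux {n i : ℕ} (h : i + 1 < n) :
    (Rop i h : Pn n →ₗ[F] Pn n) ∘ₗ Rop i h = (1 - q) • Rop i h + q • LinearMap.id := by
  apply (basisMonomials (Fin n) F).ext
  intro d
  obtain ⟨a, ha⟩ : ∃ a, ∀ p : i < n, d ⟨i, p⟩ = a := ⟨d ⟨i, by omega⟩, fun _ => rfl⟩
  obtain ⟨b, hb⟩ : ∃ b, ∀ p : i + 1 < n, d ⟨i + 1, p⟩ = b := ⟨d ⟨i + 1, h⟩, fun _ => rfl⟩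
  simp only [coe_basisMonomials, LinearMap.comp_apply, LinearMap.add_apply,
    LinearMap.smul_apply, LinearMap.id_apply, Rop_monomial, Rval,
    swapIdx_fst, swapIdx_snd, swapIdx_swapIdx, ha, hb]
  split_ifs with h1 h2 <;>
      simp only [map_add, map_smul, Rop_monomial, Rval, swapIdx_fst, swapIdx_snd,
        swapIdx_swapIdx, ha, hb] <;>
      split_ifs <;>
    first
      | (exfalso; omega)
      | (simp only [smul_eq_C_mul, map_sub, map_one]; try ring)

lemma comm_aux {n i j : ℕ} (hi : i + 1 < n) (hj : j + 1 < n)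
    (hij : i + 1 < j ∨ j + 1 < i) :
    (Rop i hi : Pn n →ₗ[F] Pn n) ∘ₗ Rop j hj = Rop j hj ∘ₗ Rop i hi := by
  apply (basisMonomials (Fin n) F).ext
  intro d
  obtain ⟨a, ha⟩ : ∃ a, ∀ p : i < n, d ⟨i, p⟩ = a := ⟨d ⟨i, by omega⟩, fun _ => rfl⟩
  obtain ⟨b, hb⟩ : ∃ b, ∀ p : i + 1 < n, d ⟨i + 1, p⟩ = b := ⟨d ⟨i + 1, hi⟩, fun _ => rfl⟩
  obtain ⟨c, hc⟩ : ∃ c, ∀ p : j < n, d ⟨j, p⟩ = c := ⟨d ⟨j, by omega⟩, fun _ => rfl⟩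
  obtain ⟨e, he⟩ : ∃ e, ∀ p : j + 1 < n, d ⟨j + 1, p⟩ = e := ⟨d ⟨j + 1, hj⟩, fun _ => rfl⟩
  have oi : ∀ (v : Fin n →₀ ℕ) (p : i < n), swapIdx n j hj v ⟨i, p⟩ = v ⟨i, p⟩ :=
    fun v p => swapIdx_other hj v i p (by omega) (by omega)
  have oi1 : ∀ (v : Fin n →₀ ℕ) (p : i + 1 < n), swapIdx n j hj v ⟨i + 1, p⟩ = v ⟨i + 1, p⟩ :=
    fun v p => swapIdx_other hj v (i + 1) p (by omega) (by omega)
  have oj : ∀ (v : Fin n →₀ ℕ) (p : j < n), swapIdx n i hi v ⟨j, p⟩ = v ⟨j, p⟩ :=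
    fun v p => swapIdx_other hi v j p (by omega) (by omega)
  have oj1 : ∀ (v : Fin n →₀ ℕ) (p : j + 1 < n), swapIdx n i hi v ⟨j + 1, p⟩ = v ⟨j + 1, p⟩ :=
    fun v p => swapIdx_other hi v (j + 1) p (by omega) (by omega)
  have hcm : ∀ v : Fin n →₀ ℕ, swapIdx n j hj (swapIdx n i hi v) = swapIdx n i hi (swapIdx n j hj v) :=
    swapIdx_comm hi hj hij
  simp only [coe_basisMonomials, LinearMap.comp_apply, Rop_monomial, Rval, map_add, map_smul,
    swapIdx_fst, swapIdx_snd, oi, oi1, oj, oj1, hcm, ha, hb, hc, he]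
  split_ifs <;>
      (try simp only [Rop_monomial, Rval, map_add, map_smul, swapIdx_fst, swapIdx_snd,
        oi, oi1, oj, oj1, hcm, ha, hb, hc, he]) <;>
      (try split_ifs) <;>
    first
      | (exfalso; omega)
      | rfl
      | (simp only [smul_eq_C_mul, map_sub, map_one]; try ring)

set_option maxHeartbeats 2000000 in
lemma braid_aux {n i : ℕ} (h1 : i + 1 < n) (h2 : i + 1 + 1 < n) :
    (Rop i h1 : Pn n →ₗ[F] Pn n) ∘ₗ (Rop (i + 1) h2 ∘ₗ Rop i h1)
      = Rop (i + 1) h2 ∘ₗ (Rop i h1 ∘ₗ Rop (i + 1) h2) := by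
  apply (basisMonomials (Fin n) F).ext
  intro d
  obtain ⟨a, ha⟩ : ∃ a, ∀ p : i < n, d ⟨i, p⟩ = a := ⟨d ⟨i, by omega⟩, fun _ => rfl⟩
  obtain ⟨b, hb⟩ : ∃ b, ∀ p : i + 1 < n, d ⟨i + 1, p⟩ = b := ⟨d ⟨i + 1, h1⟩, fun _ => rfl⟩
  obtain ⟨c, hc⟩ : ∃ c, ∀ p : i + 1 + 1 < n, d ⟨i + 1 + 1, p⟩ = c := ⟨d ⟨i + 1 + 1, h2⟩, fun _ => rfl⟩
  have o1 : ∀ (v : Fin n →₀ ℕ) (p : i + 1 + 1 < n), swapIdx n i h1 v ⟨i + 1 + 1, p⟩ = v ⟨i + 1 + 1, p⟩ :=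
    fun v p => swapIdx_other h1 v (i + 1 + 1) p (by omega) (by omega)
  have o2 : ∀ (v : Fin n →₀ ℕ) (p : i < n), swapIdx n (i + 1) h2 v ⟨i, p⟩ = v ⟨i, p⟩ :=
    fun v p => swapIdx_other h2 v i p (by omega) (by omega)
  simp only [coe_basisMonomials, LinearMap.comp_apply, Rop_monomial, Rval, map_add, map_smul,
    swapIdx_fst, swapIdx_snd, o1, o2, swapIdx_swapIdx, swapIdx_braid, ha, hb, hc]
  split_ifs <;>
      (try simp only [Rop_monomial, Rval, map_add, map_smul, swapIdx_fst, swapIdx_snd,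
        o1, o2, swapIdx_swapIdx, swapIdx_braid, ha, hb, hc]) <;>
      (try split_ifs) <;>
      (try simp only [Rop_monomial, Rval, map_add, map_smul, swapIdx_fst, swapIdx_snd,
        o1, o2, swapIdx_swapIdx, swapIdx_braid, ha, hb, hc]) <;>
      (try split_ifs) <;>
    first
      | (exfalso; omega)
      | rfl
      | (simp only [smul_eq_C_mul, map_sub, map_one]; try ring)

/-- the operators `R_i` satisfy the Hecke algebra relations. -/
theorem stmt7 (n : ℕ) (hn : 2 ≤ n) :
    HeckeRels (fun i h => (Rop i h : Pn n →ₗ[F] Pn n)) := by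
  refine ⟨fun i h => braid_aux (by omega) (by omega),
    fun i j hi hj hij => comm_aux hi hj hij,
    fun i h => quad_aux h⟩

end
end

section
/- Let 1 ≤ i ≤ n−1 and let w ∈ S_n satisfy ℓ(w·s_i) < ℓ(w). Then for every v ∈ S_n, the coefficient of 𝔖_w in the Schubert-basis expansion of the image of A_i(𝔖_v) in P_n/I_n equals −q if v = w, and equals 0 if v ≠ w. -/
open MvPolynomial

noncomputable section

section AuxLemmas

variable {n : ℕ}

lemma xne (i : ℕ) (h : i + 1 < n) :
    (X (⟨i, by omega⟩ : Fin n) - X ⟨i + 1, h⟩ : Pn n) ≠ 0 := by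
  have hab : (⟨i, by omega⟩ : Fin n) ≠ ⟨i + 1, h⟩ := by simp [Fin.ext_iff]
  intro hc
  exact hab (MvPolynomial.X_injective (sub_eq_zero.mp hc))

lemma tA (i : ℕ) (h : i + 1 < n) : transp n i h ⟨i, by omega⟩ = ⟨i + 1, h⟩ :=
  Equiv.swap_apply_left _ _

lemma tB (i : ℕ) (h : i + 1 < n) : transp n i h ⟨i + 1, h⟩ = ⟨i, by omega⟩ :=
  Equiv.swap_apply_right _ _

lemma tt (i : ℕ) (h : i + 1 < n) : transp n i h * transp n i h = 1 :=
  Equiv.swap_mul_self _ _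

lemma rename_invol (i : ℕ) (h : i + 1 < n) (f : Pn n) :
    rename (⇑(transp n i h)) (rename (⇑(transp n i h)) f) = f := by
  rw [rename_rename, ← Equiv.Perm.coe_mul, tt, Equiv.Perm.coe_one, rename_id, AlgHom.id_apply]

lemma dd_leib (i : ℕ) (h : i + 1 < n) (dd : DDFam n) (hdd : IsDD dd) (p f : Pn n) :
    dd i h (p * f) = dd i h p * f + rename (⇑(transp n i h)) p * dd i h f := by
  apply mul_left_cancel₀ (xne i h)
  have h1 := hdd i h p
  have h2 := hdd i h f
  have h3 := hdd i h (p * f)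
  rw [map_mul (rename (⇑(transp n i h)))] at h3
  linear_combination h3 - f * h1 - rename (⇑(transp n i h)) p * h2

lemma dd_symm (i : ℕ) (h : i + 1 < n) (dd : DDFam n) (hdd : IsDD dd) (f : Pn n) :
    rename (⇑(transp n i h)) (dd i h f) = dd i h f := by
  apply mul_left_cancel₀ (xne i h)
  have h2 := hdd i h f
  have h4 := congrArg (rename (⇑(transp n i h))) h2
  rw [map_mul, map_sub, map_sub, rename_X, rename_X, tA, tB, rename_invol] at h4
  linear_combination -h4 - h2

lemma dd_dd (i : ℕ) (h : i + 1 < n) (dd : DDFam n) (hdd : IsDD dd) (f : Pn n) :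
    dd i h (dd i h f) = 0 := by
  have h2 := hdd i h (dd i h f)
  rw [dd_symm i h dd hdd, sub_self] at h2
  exact (mul_eq_zero.mp h2).resolve_left (xne i h)

lemma dd_X (i : ℕ) (h : i + 1 < n) (dd : DDFam n) (hdd : IsDD dd) :
    dd i h (X ⟨i, by omega⟩) = 1 := by
  apply mul_left_cancel₀ (xne i h)
  have h1 := hdd i h (X ⟨i, by omega⟩)
  rw [rename_X, tA] at h1
  rw [h1, mul_one]

lemma dd_Aop (i : ℕ) (h : i + 1 < n) (dd : DDFam n) (hdd : IsDD dd) (f : Pn n) :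
    dd i h (Aop dd i h f) = (-q) • dd i h f := by
  have : Aop dd i h f =
      dd i h (X ⟨i, by omega⟩ * f) - q • (X (⟨i, by omega⟩ : Fin n) * dd i h f) := by
    simp [Aop, Xop]
  rw [this, map_sub, map_smul, dd_dd i h dd hdd,
    dd_leib i h dd hdd (X ⟨i, by omega⟩) (dd i h f), dd_X i h dd hdd,
    dd_dd i h dd hdd, mul_zero, add_zero, one_mul, zero_sub, neg_smul]

lemma dd_mem_In (i : ℕ) (h : i + 1 < n) (dd : DDFam n) (hdd : IsDD dd) (f : Pn n)
    (hf : f ∈ In n) : dd i h f ∈ In n := by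
  refine Submodule.span_induction (p := fun x _ => dd i h x ∈ In n) ?_ ?_ ?_ ?_ hf
  · intro g hg
    have h2 := hdd i h g
    rw [hg.1 (transp n i h), sub_self] at h2
    rw [(mul_eq_zero.mp h2).resolve_left (xne i h)]
    exact zero_mem _
  · show dd i h 0 ∈ In n
    rw [map_zero]; exact zero_mem _
  · intro x y _ _ hx hy
    show dd i h (x + y) ∈ In n
    rw [map_add]; exact add_mem hx hy
  · intro r x hx hdx
    show dd i h (r • x) ∈ In n
    rw [smul_eq_mul, dd_leib i h dd hdd]
    exact add_mem (Ideal.mul_mem_left _ _ hx) (Ideal.mul_mem_left _ _ hdx)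

lemma signAux_eq_len (u : Equiv.Perm (Fin n)) :
    Equiv.Perm.signAux u = (-1 : ℤˣ) ^ len u := by
  rw [Equiv.Perm.signAux, ← Finset.prod_filter, Finset.prod_const]
  congr 1
  apply Finset.card_bij (fun x _ => ((x.2, x.1) : Fin n × Fin n))
  · intro x hx
    simp only [Finset.mem_filter, Equiv.Perm.mem_finPairsLT] at hx
    simp only [Finset.mem_filter, Finset.mem_univ, true_and]
    refine ⟨hx.1, lt_of_le_of_ne hx.2 (fun hc => ?_)⟩
    exact absurd (u.injective hc) (ne_of_gt hx.1)
  · intro x hx y hy hxy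
    have h1 : x.2 = y.2 := congrArg Prod.fst hxy
    have h2 : x.1 = y.1 := congrArg Prod.snd hxy
    exact Sigma.ext h2 (heq_of_eq h1)
  · intro p hp
    simp only [Finset.mem_filter, Finset.mem_univ, true_and] at hp
    refine ⟨⟨p.2, p.1⟩, ?_, rfl⟩
    simp only [Finset.mem_filter, Equiv.Perm.mem_finPairsLT]
    exact ⟨hp.1, le_of_lt hp.2⟩

lemma len_ne (i : ℕ) (h : i + 1 < n) (u : Equiv.Perm (Fin n)) :
    len (u * transp n i h) ≠ len u := by
  have hab : (⟨i, by omega⟩ : Fin n) ≠ ⟨i + 1, h⟩ := by simp [Fin.ext_iff]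
  have hs : Equiv.Perm.signAux (u * transp n i h)
      = -Equiv.Perm.signAux u := by
    rw [Equiv.Perm.signAux_mul, transp, Equiv.Perm.signAux_swap hab, mul_neg_one]
  intro heq
  rw [signAux_eq_len, signAux_eq_len, heq] at hs
  rcases Int.units_eq_one_or ((-1 : ℤˣ) ^ len u) with h1 | h1 <;> rw [h1] at hs <;>
    exact absurd hs (by decide)

end AuxLemmas

lemma dd_S_eq (i : ℕ) (h : i + 1 < n) (dd : DDFam n) (hdd : IsDD dd)
    (S : Equiv.Perm (Fin n) → Pn n) (hS : IsSchubert dd S) (u : Equiv.Perm (Fin n)) :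
    dd i h (S u) = if len (u * transp n i h) < len u then S (u * transp n i h) else 0 := by
  by_cases hd : len (u * transp n i h) < len u
  · rw [if_pos hd]; exact hS.2 u i h hd
  · rw [if_neg hd]
    have hlt : len u < len (u * transp n i h) :=
      lt_of_le_of_ne (not_lt.mp hd) (Ne.symm (len_ne i h u))
    have h2 : (u * transp n i h) * transp n i h = u := by
      rw [mul_assoc, tt, mul_one]
    have h3 : len ((u * transp n i h) * transp n i h) < len (u * transp n i h) := by
      rw [h2]; exact hlt
    have h4 := hS.2 (u * transp n i h) i h h3
    rw [h2] at h4
    rw [← h4, dd_dd i h dd hdd]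

set_option maxHeartbeats 2000000 in
set_option synthInstance.maxHeartbeats 400000 in
/-- the coefficient of `𝔖_w` in `A_i 𝔖_v` (mod `I_n`) equals `-q` if
`v = w` and `0` otherwise, whenever `ℓ(w s_i) < ℓ(w)`. -/
theorem stmt19 (n : ℕ) (hn : 2 ≤ n) (dd : DDFam n) (hdd : IsDD dd)
    (S : Equiv.Perm (Fin n) → Pn n) (hS : IsSchubert dd S)
    (B : Module.Basis (Equiv.Perm (Fin n)) F (Pn n ⧸ In n)) (hB : ∀ v, B v = mkI n (S v))
    (i : ℕ) (h : i + 1 < n) (w : Equiv.Perm (Fin n))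
    (hw : len (w * transp n i h) < len w) (v : Equiv.Perm (Fin n)) :
    B.repr (mkI n (Aop dd i h (S v))) w = if v = w then -q else 0 := by
  classical
  set t := transp n i h with htdef
  set c : Equiv.Perm (Fin n) →₀ F := B.repr (mkI n (Aop dd i h (S v))) with hc
  have hrep : (∑ u : Equiv.Perm (Fin n), c u • mkI n (S u)) = mkI n (Aop dd i h (S v)) := by
    rw [hc]
    calc (∑ u : Equiv.Perm (Fin n), B.repr (mkI n (Aop dd i h (S v))) u • mkI n (S u))
        = ∑ u : Equiv.Perm (Fin n), B.repr (mkI n (Aop dd i h (S v))) u • B u := by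
          simp only [hB]
      _ = mkI n (Aop dd i h (S v)) := B.sum_repr _
  have hmem : (∑ u : Equiv.Perm (Fin n), c u • S u) - Aop dd i h (S v) ∈ In n := by
    have h0 : mkI n ((∑ u : Equiv.Perm (Fin n), c u • S u) - Aop dd i h (S v)) = 0 := by
      rw [map_sub, map_sum]
      simp only [map_smul]
      rw [hrep, sub_self]
    rwa [mkI, AlgHom.toLinearMap_apply, Ideal.Quotient.mkₐ_eq_mk,
      Ideal.Quotient.eq_zero_iff_mem] at h0
  have hmem2 : (∑ u : Equiv.Perm (Fin n), c u • dd i h (S u)) - dd i h (Aop dd i h (S v))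
      ∈ In n := by
    have h5 := dd_mem_In i h dd hdd _ hmem
    rw [map_sub, map_sum] at h5
    simp only [map_smul] at h5
    exact h5
  have key : (∑ u : Equiv.Perm (Fin n), c u • mkI n (dd i h (S u)))
      = (-q) • mkI n (dd i h (S v)) := by
    have h6 : mkI n ((∑ u : Equiv.Perm (Fin n), c u • dd i h (S u))
        - dd i h (Aop dd i h (S v))) = 0 := by
      rw [mkI, AlgHom.toLinearMap_apply, Ideal.Quotient.mkₐ_eq_mk,
        Ideal.Quotient.eq_zero_iff_mem]
      exact hmem2
    rw [map_sub, sub_eq_zero, map_sum] at h6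
    simp only [map_smul] at h6
    rw [h6, dd_Aop i h dd hdd, map_smul]
  have hform : ∀ u : Equiv.Perm (Fin n),
      mkI n (dd i h (S u)) = if len (u * t) < len u then B (u * t) else 0 := by
    intro u
    rw [dd_S_eq i h dd hdd S hS u]
    by_cases hd : len (u * t) < len u
    · rw [if_pos hd, if_pos hd, hB]
    · rw [if_neg hd, if_neg hd, map_zero]
  have hwval : ∀ u : Equiv.Perm (Fin n),
      (B.repr (if len (u * t) < len u then B (u * t) else 0)) (w * t)
        = if u = w then 1 else 0 := by
    intro u
    by_cases hu : u = w
    · subst hu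
      rw [if_pos hw, if_pos rfl, B.repr_self, Finsupp.single_apply, if_pos rfl]
    · have hne : u * t ≠ w * t := fun hcc => hu (mul_right_cancel hcc)
      rw [if_neg hu]
      by_cases hd : len (u * t) < len u
      · rw [if_pos hd, B.repr_self, Finsupp.single_apply, if_neg hne]
      · rw [if_neg hd, LinearEquiv.map_zero, Finsupp.coe_zero, Pi.zero_apply]
  have hLval : (B.repr (∑ u : Equiv.Perm (Fin n), c u • mkI n (dd i h (S u)))) (w * t)
      = c w := by
    rw [map_sum, Finset.sum_apply']
    have hterm : ∀ u : Equiv.Perm (Fin n),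
        (B.repr (c u • mkI n (dd i h (S u)))) (w * t) = if u = w then c w else 0 := by
      intro u
      rw [map_smul, Finsupp.smul_apply, hform u, hwval u, smul_eq_mul, mul_ite, mul_one,
        mul_zero]
      by_cases hu : u = w
      · rw [if_pos hu, if_pos hu, hu]
      · rw [if_neg hu, if_neg hu]
    rw [Finset.sum_congr rfl (fun u _ => hterm u), Finset.sum_ite_eq' Finset.univ w]
    simp
  have hRval : (((-q) • B.repr (mkI n (dd i h (S v))) : Equiv.Perm (Fin n) →₀ F)) (w * t)
      = if v = w then -q else 0 := by
    rw [Finsupp.smul_apply, hform v, hwval v, smul_eq_mul, mul_ite, mul_one, mul_zero]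
  calc c w
      = (B.repr (∑ u : Equiv.Perm (Fin n), c u • mkI n (dd i h (S u)))) (w * t) :=
        hLval.symm
    _ = (((-q) • B.repr (mkI n (dd i h (S v))) : Equiv.Perm (Fin n) →₀ F)) (w * t) := by
        rw [key, map_smul]
    _ = if v = w then -q else 0 := hRval


end
end
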